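/- Let d ≥ 1 be an integer, δ > 0, and let ψ : [0,∞) → [0,∞) be nonincreasing with ∑_{m=1}^∞ m^{d−1} ψ(mδ) < ∞; write C = ψ(0) + 10^d ∑_{m=1}^∞ m^{d−1} ψ(mδ). Let k : ℝ^d × ℝ^d → ℝ be a symmetric positive semi-definite kernel with |k(x,x')| ≤ ψ(‖x − x'‖) for all x, x'. Let x₁,…,x_N be δ-separated points in ℝ^d, K the N×N matrix with K_{ij} = k(x_i,x_j), and Λ a diagonal N×N matrix whose diagonal entries all lie in [Λ_min, Λ_max] with Λ_min > 0. Then K + Λ is positive definite and its condition number satisfies cond(K + Λ) ≤ (C + Λ_max)/Λ_min. -/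

import Mathlib

open Matrix MeasureTheory Metric

lemma aux_numeric (d m : ℕ) (hd : 1 ≤ d) (hm : 1 ≤ m) :
    ((2*m+3 : ℝ))^d - (2*(m:ℝ)-1)^d ≤ 10^d * (m:ℝ)^(d-1) := by
  have hm1 : (1:ℝ) ≤ (m:ℝ) := by exact_mod_cast hm
  have hb0 : (0:ℝ) ≤ 2*(m:ℝ)-1 := by linarith
  have hba : 2*(m:ℝ)-1 ≤ 2*(m:ℝ)+3 := by linarith
  have key : ((2*(m:ℝ)+3))^d - (2*(m:ℝ)-1)^d
      = (∑ i ∈ Finset.range d, (2*(m:ℝ)+3)^i * (2*(m:ℝ)-1)^(d-1-i)) * ((2*(m:ℝ)+3) - (2*(m:ℝ)-1)) := by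
    rw [geom_sum₂_mul]
  have hterm : ∀ i ∈ Finset.range d, (2*(m:ℝ)+3)^i * (2*(m:ℝ)-1)^(d-1-i) ≤ (2*(m:ℝ)+3)^(d-1) := by
    intro i hi
    have hi' : i ≤ d - 1 := Nat.le_sub_one_of_lt (Finset.mem_range.mp hi)
    calc (2*(m:ℝ)+3)^i * (2*(m:ℝ)-1)^(d-1-i)
        ≤ (2*(m:ℝ)+3)^i * (2*(m:ℝ)+3)^(d-1-i) := by
          apply mul_le_mul_of_nonneg_left (pow_le_pow_left₀ hb0 hba _) (by positivity)
      _ = (2*(m:ℝ)+3)^(d-1) := by rw [← pow_add]; congr 1; omega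
  have hsum : (∑ i ∈ Finset.range d, (2*(m:ℝ)+3)^i * (2*(m:ℝ)-1)^(d-1-i))
      ≤ d * (2*(m:ℝ)+3)^(d-1) := by
    calc _ ≤ ∑ _i ∈ Finset.range d, (2*(m:ℝ)+3)^(d-1) := Finset.sum_le_sum hterm
      _ = d * (2*(m:ℝ)+3)^(d-1) := by simp [Finset.sum_const, mul_comm]
  have h5 : (2*(m:ℝ)+3) ≤ 5 * m := by linarith
  have hpow : (2*(m:ℝ)+3)^(d-1) ≤ 5^(d-1) * (m:ℝ)^(d-1) := by
    rw [← mul_pow]; exact pow_le_pow_left₀ (by linarith) h5 _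
  have hd2 : (4:ℝ) * d ≤ 5 * 2^d := by
    have : (d:ℝ) ≤ 2^d := by exact_mod_cast (Nat.lt_two_pow_self (n := d)).le
    have h2 : (1:ℝ) ≤ 2^d := one_le_pow₀ (by norm_num)
    linarith
  have h10 : (4:ℝ) * d * 5^(d-1) ≤ 10^d := by
    have : (10:ℝ)^d = 2^d * 5^d := by rw [← mul_pow]; norm_num
    have h5d : (5:ℝ)^d = 5 * 5^(d-1) := by
      rw [← pow_succ']; congr 1; omega
    rw [this, h5d]
    have h5p : (0:ℝ) ≤ 5^(d-1) := by positivity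
    nlinarith
  calc ((2*(m:ℝ)+3))^d - (2*(m:ℝ)-1)^d
      ≤ (d * (2*(m:ℝ)+3)^(d-1)) * 4 := by
        rw [key]
        have h4 : (2*(m:ℝ)+3) - (2*(m:ℝ)-1) = 4 := by ring
        rw [h4]
        exact mul_le_mul_of_nonneg_right hsum (by norm_num)
    _ ≤ (d * (5^(d-1) * (m:ℝ)^(d-1))) * 4 := by
        have : (0:ℝ) ≤ d := Nat.cast_nonneg d
        nlinarith
    _ ≤ 10^d * (m:ℝ)^(d-1) := by
        have hmp : (0:ℝ) ≤ (m:ℝ)^(d-1) := by positivity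
        nlinarith

open MeasureTheory Metric

lemma aux_packing (d : ℕ) (hd : 1 ≤ d) (δ : ℝ) (hδ : 0 < δ)
    {ι : Type*} [Fintype ι] [DecidableEq ι]
    (p : ι → EuclideanSpace ℝ (Fin d)) (c : EuclideanSpace ℝ (Fin d))
    (hsep : ∀ i j, i ≠ j → δ ≤ ‖p i - p j‖)
    (s : Finset ι) (m : ℕ) (hm : 1 ≤ m)
    (hlo : ∀ j ∈ s, (m : ℝ) * δ ≤ ‖p j - c‖)
    (hhi : ∀ j ∈ s, ‖p j - c‖ < ((m : ℝ)+1) * δ) :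
    (s.card : ℝ) ≤ (2*(m:ℝ)+3)^d - (2*(m:ℝ)-1)^d := by
  classical
  set μ : Measure (EuclideanSpace ℝ (Fin d)) := volume with hμ
  have hfr : Module.finrank ℝ (EuclideanSpace ℝ (Fin d)) = d := finrank_euclideanSpace_fin
  have hm1 : (1:ℝ) ≤ (m:ℝ) := by exact_mod_cast hm
  set r1 : ℝ := (2*(m:ℝ)-1) * (δ/2) with hr1
  set r2 : ℝ := (2*(m:ℝ)+3) * (δ/2) with hr2
  have hr1pos : 0 < r1 := by
    apply mul_pos (by linarith) (by linarith)
  have hr2pos : 0 < r2 := by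
    apply mul_pos (by linarith) (by linarith)
  set I : Set (EuclideanSpace ℝ (Fin d)) := ball c r1 with hI
  set U : Set (EuclideanSpace ℝ (Fin d)) := ⋃ j ∈ s, ball (p j) (δ/2) with hU
  -- disjointness of the small balls among themselves
  have hdisj : (s : Set ι).PairwiseDisjoint (fun j => ball (p j) (δ/2)) := by
    intro i hi j hj hij
    apply ball_disjoint_ball
    have := hsep i j hij
    rw [dist_eq_norm]
    linarith
  have hIU : Disjoint I U := by
    rw [hU, Set.disjoint_iUnion₂_right]
    intro j hj
    apply ball_disjoint_ball
    have := hlo j hj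
    rw [dist_eq_norm, norm_sub_rev]
    linarith
  -- containment
  have hsub : I ∪ U ⊆ closedBall c r2 := by
    apply Set.union_subset
    · exact (ball_subset_closedBall).trans (closedBall_subset_closedBall (by nlinarith))
    · rw [hU]
      apply Set.iUnion₂_subset
      intro j hj
      intro y hy
      have h1 : dist y (p j) < δ/2 := mem_ball.mp hy
      have h2 : dist (p j) c < ((m:ℝ)+1) * δ := by
        rw [dist_eq_norm]; exact hhi j hj
      have := dist_triangle y (p j) c
      simp only [mem_closedBall]
      have : dist y c < r2 := by
        calc dist y c ≤ dist y (p j) + dist (p j) c := dist_triangle y (p j) c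
          _ < δ/2 + ((m:ℝ)+1) * δ := by linarith
          _ = r2 := by rw [hr2]; ring
      linarith
  -- measure computations
  have hUmeas : μ U = s.card * ENNReal.ofReal ((δ/2)^d) * μ (ball 0 1) := by
    rw [hU, measure_biUnion_finset hdisj (fun j _ => measurableSet_ball)]
    have : ∀ j ∈ s, μ (ball (p j) (δ/2)) = ENNReal.ofReal ((δ/2)^d) * μ (ball 0 1) := by
      intro j _
      rw [Measure.addHaar_ball_of_pos μ _ (by linarith), hfr]
    rw [Finset.sum_congr rfl this, Finset.sum_const, nsmul_eq_mul, mul_assoc]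
  have hImeas : μ I = ENNReal.ofReal (r1^d) * μ (ball 0 1) := by
    rw [hI, Measure.addHaar_ball_of_pos μ _ hr1pos, hfr]
  have hCmeas : μ (closedBall c r2) = ENNReal.ofReal (r2^d) * μ (ball 0 1) := by
    rw [Measure.addHaar_closedBall μ _ hr2pos.le, hfr]
  have hunion : μ I + μ U ≤ μ (closedBall c r2) := by
    rw [← measure_union hIU (by
      rw [hU]; exact (s : Set ι).toFinite.measurableSet_biUnion (fun j _ => measurableSet_ball))]
    exact measure_mono hsub
  rw [hImeas, hUmeas, hCmeas] at hunion
  have hB0 : μ (ball (0 : EuclideanSpace ℝ (Fin d)) 1) ≠ 0 := (measure_ball_pos μ 0 one_pos).ne'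
  have hBt : μ (ball (0 : EuclideanSpace ℝ (Fin d)) 1) ≠ ⊤ := measure_ball_lt_top.ne
  have hfac : (ENNReal.ofReal (r1^d) + s.card * ENNReal.ofReal ((δ/2)^d))
      ≤ ENNReal.ofReal (r2^d) := by
    have h := hunion
    rw [← add_mul] at h
    exact (ENNReal.mul_le_mul_iff_left hB0 hBt).mp h
  -- convert to real inequality
  have hreal : r1^d + (s.card : ℝ) * (δ/2)^d ≤ r2^d := by
    have h1 : ENNReal.ofReal (r1^d + (s.card : ℝ) * (δ/2)^d) ≤ ENNReal.ofReal (r2^d) := by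
      rw [ENNReal.ofReal_add (by positivity) (by positivity), ENNReal.ofReal_mul (by positivity),
        ENNReal.ofReal_natCast]
      exact hfac
    exact (ENNReal.ofReal_le_ofReal_iff (by positivity)).mp h1
  have hδ2 : (0:ℝ) < (δ/2)^d := by positivity
  rw [hr1, hr2, mul_pow, mul_pow] at hreal
  rw [← sub_nonneg]
  have h2 : ((2*(m:ℝ)+3)^d - (2*(m:ℝ)-1)^d - s.card) * (δ/2)^d ≥ 0 := by nlinarith
  exact nonneg_of_mul_nonneg_right (by linarith [h2]) hδ2

lemma aux_rowsum (d : ℕ) (hd : 1 ≤ d) (δ : ℝ) (hδ : 0 < δ)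
    (ψ : ℝ → ℝ) (hψ_nonneg : ∀ t, 0 ≤ ψ t) (hψ_mono : AntitoneOn ψ (Set.Ici 0))
    (hψ_sum : Summable fun m : ℕ => ((m : ℝ) + 1) ^ (d - 1) * ψ (((m : ℝ) + 1) * δ))
    (N : ℕ) (x : Fin N → EuclideanSpace ℝ (Fin d))
    (hsep : ∀ i j, i ≠ j → δ ≤ ‖x i - x j‖) (i : Fin N) :
    ∑ j ∈ Finset.univ.erase i, ψ ‖x i - x j‖
      ≤ 10^d * ∑' m : ℕ, ((m : ℝ) + 1) ^ (d - 1) * ψ (((m : ℝ) + 1) * δ) := by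
  classical
  set s : Finset (Fin N) := Finset.univ.erase i with hs
  set f : Fin N → ℕ := fun j => ⌊‖x i - x j‖ / δ⌋₊ - 1 with hf
  -- key properties of f on s
  have hkey : ∀ j ∈ s, ((f j : ℝ) + 1) * δ ≤ ‖x i - x j‖ ∧
      ‖x i - x j‖ < ((f j : ℝ) + 2) * δ := by
    intro j hj
    have hji : j ≠ i := Finset.ne_of_mem_erase hj
    have hsep' : δ ≤ ‖x i - x j‖ := hsep i j (Ne.symm hji)
    have hpos : 0 < ‖x i - x j‖ := lt_of_lt_of_le hδ hsep'
    have h1 : 1 ≤ ⌊‖x i - x j‖ / δ⌋₊ := by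
      apply Nat.one_le_floor_iff _ |>.mpr
      rw [le_div_iff₀ hδ]; linarith
    have hfj : (f j : ℝ) + 1 = (⌊‖x i - x j‖ / δ⌋₊ : ℝ) := by
      rw [hf]; push_cast [Nat.cast_sub h1]; ring
    constructor
    · rw [hfj, ← le_div_iff₀ hδ]
      exact Nat.floor_le (by positivity)
    · have := Nat.lt_floor_add_one (‖x i - x j‖ / δ)
      rw [div_lt_iff₀ hδ] at this
      calc ‖x i - x j‖ < (⌊‖x i - x j‖ / δ⌋₊ + 1) * δ := this
        _ = ((f j : ℝ) + 2) * δ := by rw [← hfj]; ring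
  -- step 1 : bound each term
  have hstep1 : ∑ j ∈ s, ψ ‖x i - x j‖ ≤ ∑ j ∈ s, ψ (((f j : ℝ) + 1) * δ) := by
    apply Finset.sum_le_sum
    intro j hj
    have h1 : ((f j : ℝ) + 1) * δ ∈ Set.Ici (0:ℝ) := by
      simp only [Set.mem_Ici]; positivity
    have h2 : ‖x i - x j‖ ∈ Set.Ici (0:ℝ) := by
      simp only [Set.mem_Ici]; positivity
    exact hψ_mono h1 h2 (hkey j hj).1
  -- step 2 : fiberwise
  set T : Finset ℕ := s.image f with hT
  have hstep2 : ∑ j ∈ s, ψ (((f j : ℝ) + 1) * δ)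
      = ∑ n ∈ T, ((s.filter fun j => f j = n).card : ℝ) * ψ (((n : ℝ) + 1) * δ) := by
    rw [← Finset.sum_fiberwise_of_maps_to' (fun j hj => Finset.mem_image_of_mem f hj)
      (fun n => ψ (((n : ℝ) + 1) * δ))]
    exact Finset.sum_congr rfl fun n _ => by rw [Finset.sum_const, nsmul_eq_mul]
  -- step 3 : fiber card bound
  have hcard : ∀ n ∈ T, ((s.filter fun j => f j = n).card : ℝ) ≤ 10^d * ((n:ℝ)+1)^(d-1) := by
    intro n hn
    have hpack := aux_packing d hd δ hδ x (x i) (fun a b hab => hsep a b hab)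
      (s.filter fun j => f j = n) (n+1) (Nat.le_add_left 1 n)
      (by
        intro j hj
        obtain ⟨hjs, hjf⟩ := Finset.mem_filter.mp hj
        have := (hkey j hjs).1
        rw [norm_sub_rev, hjf] at this
        push_cast at this ⊢
        linarith)
      (by
        intro j hj
        obtain ⟨hjs, hjf⟩ := Finset.mem_filter.mp hj
        have := (hkey j hjs).2
        rw [norm_sub_rev, hjf] at this
        push_cast at this ⊢
        linarith)
    have hnum := aux_numeric d (n+1) hd (Nat.le_add_left 1 n)
    push_cast at hpack hnum ⊢
    linarith
  -- step 4 : compare to tsum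
  have hstep4 : ∑ n ∈ T, ((n:ℝ)+1)^(d-1) * ψ (((n : ℝ) + 1) * δ)
      ≤ ∑' m : ℕ, ((m : ℝ) + 1) ^ (d - 1) * ψ (((m : ℝ) + 1) * δ) := by
    apply Summable.sum_le_tsum
    · intro n _
      exact mul_nonneg (by positivity) (hψ_nonneg _)
    · exact hψ_sum
  calc ∑ j ∈ s, ψ ‖x i - x j‖ ≤ ∑ j ∈ s, ψ (((f j : ℝ) + 1) * δ) := hstep1
    _ = ∑ n ∈ T, ((s.filter fun j => f j = n).card : ℝ) * ψ (((n : ℝ) + 1) * δ) := hstep2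
    _ ≤ ∑ n ∈ T, 10^d * (((n:ℝ)+1)^(d-1) * ψ (((n : ℝ) + 1) * δ)) := by
        apply Finset.sum_le_sum
        intro n hn
        rw [← mul_assoc]
        exact mul_le_mul_of_nonneg_right (hcard n hn) (hψ_nonneg _)
    _ = 10^d * ∑ n ∈ T, ((n:ℝ)+1)^(d-1) * ψ (((n : ℝ) + 1) * δ) := by
        rw [Finset.mul_sum]
    _ ≤ _ := by
        apply mul_le_mul_of_nonneg_left hstep4 (by positivity)


-- quadratic form bound from row sums
lemma aux_quadform (N : ℕ) (K : Matrix (Fin N) (Fin N) ℝ)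
    (hsymm : ∀ i j, |K i j| = |K j i|) (C : ℝ)
    (hrow : ∀ i, ∑ j, |K i j| ≤ C) (v : Fin N → ℝ) :
    v ⬝ᵥ K *ᵥ v ≤ C * ∑ j, (v j)^2 := by
  have hv2 : (0:ℝ) ≤ ∑ j, (v j)^2 := Finset.sum_nonneg fun j _ => sq_nonneg _
  have step1 : v ⬝ᵥ K *ᵥ v ≤ ∑ i, ∑ j, |K i j| * (((v i)^2 + (v j)^2)/2) := by
    calc v ⬝ᵥ K *ᵥ v
        = ∑ i, ∑ j, v i * (K i j * v j) := by
          simp [dotProduct, Matrix.mulVec, Finset.mul_sum]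
      _ ≤ _ := by
          apply Finset.sum_le_sum; intro i _
          apply Finset.sum_le_sum; intro j _
          have h1 : v i * (K i j * v j) ≤ |K i j| * (|v i| * |v j|) := by
            calc v i * (K i j * v j) ≤ |v i * (K i j * v j)| := le_abs_self _
              _ = |K i j| * (|v i| * |v j|) := by rw [abs_mul, abs_mul]; ring
          have h2 : |v i| * |v j| ≤ ((v i)^2 + (v j)^2)/2 := by
            nlinarith [sq_nonneg (|v i| - |v j|), sq_abs (v i), sq_abs (v j)]
          calc v i * (K i j * v j) ≤ |K i j| * (|v i| * |v j|) := h1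
            _ ≤ |K i j| * (((v i)^2 + (v j)^2)/2) :=
                mul_le_mul_of_nonneg_left h2 (abs_nonneg _)
  have split : ∑ i, ∑ j, |K i j| * (((v i)^2 + (v j)^2)/2)
      = ∑ i, (∑ j, |K i j|) * (v i)^2 := by
    have e1 : ∀ i : Fin N, ∀ j : Fin N, |K i j| * (((v i)^2 + (v j)^2)/2)
        = (1/2) * (|K i j| * (v i)^2) + (1/2) * (|K i j| * (v j)^2) := fun i j => by ring
    simp only [e1, Finset.sum_add_distrib]
    have h2 : ∑ i, ∑ j, (1/2) * (|K i j| * (v j)^2) = ∑ i, ∑ j, (1/2) * (|K i j| * (v i)^2) := by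
      rw [Finset.sum_comm]
      exact Finset.sum_congr rfl fun i _ => Finset.sum_congr rfl fun j _ => by rw [hsymm]
    rw [h2, ← Finset.sum_add_distrib]
    apply Finset.sum_congr rfl; intro i _
    rw [← Finset.sum_add_distrib, Finset.sum_mul]
    exact Finset.sum_congr rfl fun j _ => by ring
  have final : ∑ i, (∑ j, |K i j|) * (v i)^2 ≤ C * ∑ j, (v j)^2 := by
    rw [Finset.mul_sum]
    apply Finset.sum_le_sum; intro i _
    exact mul_le_mul_of_nonneg_right (hrow i) (sq_nonneg _)
  calc v ⬝ᵥ K *ᵥ v ≤ _ := step1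
    _ = _ := split
    _ ≤ _ := final


/-- For a symmetric positive semi-definite kernel `k` with nonincreasing
envelope `ψ` satisfying `∑ m^{d-1} ψ(mδ) < ∞`, write
`C = ψ(0) + 10^d ∑_{m≥1} m^{d−1} ψ(mδ)`.  For `δ`-separated points `x₁, …, x_N`, the kernel
matrix `K`, and a diagonal matrix `Λ` with diagonal entries in `[Λ_min, Λ_max]`, `Λ_min > 0`,
the matrix `K + Λ` is positive definite and `cond(K + Λ) ≤ (C + Λ_max) / Λ_min`. -/
theorem condition_number_bound_of_separated
    (d : ℕ) (hd : 1 ≤ d) (δ : ℝ) (hδ : 0 < δ)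
    (ψ : ℝ → ℝ) (hψ_nonneg : ∀ t, 0 ≤ ψ t) (hψ_mono : AntitoneOn ψ (Set.Ici 0))
    (hψ_sum : Summable fun m : ℕ => ((m : ℝ) + 1) ^ (d - 1) * ψ (((m : ℝ) + 1) * δ))
    (C : ℝ)
    (hC : C = ψ 0 + 10 ^ d * ∑' m : ℕ, ((m : ℝ) + 1) ^ (d - 1) * ψ (((m : ℝ) + 1) * δ))
    (k : EuclideanSpace ℝ (Fin d) → EuclideanSpace ℝ (Fin d) → ℝ)
    (hk_symm : ∀ x y, k x y = k y x)
    (hk_psd : ∀ (n : ℕ) (y : Fin n → EuclideanSpace ℝ (Fin d)),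
      (Matrix.of fun i j => k (y i) (y j)).PosSemidef)
    (hk_decay : ∀ x y, |k x y| ≤ ψ ‖x - y‖)
    (N : ℕ) (hN : 0 < N) (x : Fin N → EuclideanSpace ℝ (Fin d))
    (hsep : ∀ i j, i ≠ j → δ ≤ ‖x i - x j‖)
    (K : Matrix (Fin N) (Fin N) ℝ)
    (hKdef : K = Matrix.of fun i j => k (x i) (x j))
    (Λmin Λmax : ℝ) (hΛmin : 0 < Λmin)
    (lam : Fin N → ℝ) (hlam : ∀ i, Λmin ≤ lam i ∧ lam i ≤ Λmax)
    (hH : (K + Matrix.diagonal lam).IsHermitian) :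
    (K + Matrix.diagonal lam).PosDef ∧
      (⨆ i, hH.eigenvalues i) / (⨅ i, hH.eigenvalues i) ≤ (C + Λmax) / Λmin := by
  classical
  haveI : Nonempty (Fin N) := Fin.pos_iff_nonempty.mp hN
  have hKsymm : ∀ i j, |K i j| = |K j i| := by
    intro i j; rw [hKdef]; simp only [Matrix.of_apply]; rw [hk_symm]
  have hKps : K.PosSemidef := by rw [hKdef]; exact hk_psd N x
  -- row sums bounded by C
  have hrow : ∀ i, ∑ j, |K i j| ≤ C := by
    intro i
    have hsplit : |K i i| + ∑ j ∈ Finset.univ.erase i, |K i j| = ∑ j, |K i j| :=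
      Finset.add_sum_erase Finset.univ (fun j => |K i j|) (Finset.mem_univ i)
    have hdiag : |K i i| ≤ ψ 0 := by
      rw [hKdef]
      simpa using hk_decay (x i) (x i)
    have hoff : ∑ j ∈ Finset.univ.erase i, |K i j|
        ≤ ∑ j ∈ Finset.univ.erase i, ψ ‖x i - x j‖ := by
      apply Finset.sum_le_sum; intro j _
      rw [hKdef]; exact hk_decay (x i) (x j)
    have hrs := aux_rowsum d hd δ hδ ψ hψ_nonneg hψ_mono hψ_sum N x hsep i
    rw [hC, ← hsplit]
    linarith
  have hquadK : ∀ v : Fin N → ℝ, v ⬝ᵥ K *ᵥ v ≤ C * ∑ j, (v j)^2 :=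
    fun v => aux_quadform N K hKsymm C hrow v
  have hKnonneg : ∀ v : Fin N → ℝ, 0 ≤ v ⬝ᵥ K *ᵥ v := by
    intro v
    simpa using hKps.dotProduct_mulVec_nonneg (x := v)
  have hdiagquad : ∀ v : Fin N → ℝ,
      v ⬝ᵥ (Matrix.diagonal lam) *ᵥ v = ∑ j, lam j * (v j)^2 := by
    intro v
    simp only [dotProduct, Matrix.mulVec_diagonal]
    apply Finset.sum_congr rfl; intro j _; ring
  have hquadA : ∀ v : Fin N → ℝ,
      v ⬝ᵥ (K + Matrix.diagonal lam) *ᵥ v = v ⬝ᵥ K *ᵥ v + ∑ j, lam j * (v j)^2 := by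
    intro v
    rw [Matrix.add_mulVec, dotProduct_add, hdiagquad]
  have hCnn : 0 ≤ C := by
    rw [hC]
    have ht : 0 ≤ ∑' m : ℕ, ((m : ℝ) + 1) ^ (d - 1) * ψ (((m : ℝ) + 1) * δ) :=
      tsum_nonneg fun m => mul_nonneg (by positivity) (hψ_nonneg _)
    have h0 := hψ_nonneg 0
    have h10 : (0:ℝ) ≤ 10^d := by positivity
    nlinarith
  have hΛmm : Λmin ≤ Λmax := le_trans (hlam ⟨0, hN⟩).1 (hlam ⟨0, hN⟩).2
  have hlamlow : ∀ v : Fin N → ℝ, Λmin * ∑ j, (v j)^2 ≤ ∑ j, lam j * (v j)^2 := by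
    intro v
    rw [Finset.mul_sum]
    apply Finset.sum_le_sum; intro j _
    exact mul_le_mul_of_nonneg_right (hlam j).1 (sq_nonneg _)
  have hlamhigh : ∀ v : Fin N → ℝ, ∑ j, lam j * (v j)^2 ≤ Λmax * ∑ j, (v j)^2 := by
    intro v
    rw [Finset.mul_sum]
    apply Finset.sum_le_sum; intro j _
    exact mul_le_mul_of_nonneg_right (hlam j).2 (sq_nonneg _)
  -- positive definiteness
  have hPD : (K + Matrix.diagonal lam).PosDef := by
    refine Matrix.PosDef.of_dotProduct_mulVec_pos hH ?_
    intro v hv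
    have hstar : star v = v := by
      funext j; simp
    rw [hstar, hquadA]
    have hvsum : 0 < ∑ j, (v j)^2 := by
      obtain ⟨j, hj⟩ := Function.ne_iff.mp hv
      exact Finset.sum_pos' (fun j _ => sq_nonneg _)
        ⟨j, Finset.mem_univ j, sq_pos_of_ne_zero hj⟩
    have := hlamlow v
    have := hKnonneg v
    nlinarith
  -- eigenvalue bounds
  have heig : ∀ i0, Λmin ≤ hH.eigenvalues i0 ∧ hH.eigenvalues i0 ≤ C + Λmax := by
    intro i0
    set v : Fin N → ℝ := ⇑(hH.eigenvectorBasis i0) with hv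
    have hAv : (K + Matrix.diagonal lam) *ᵥ v = hH.eigenvalues i0 • v :=
      hH.mulVec_eigenvectorBasis i0
    have hnorm1 : ∑ j, (v j)^2 = 1 := by
      have h1 : ‖hH.eigenvectorBasis i0‖ = 1 := hH.eigenvectorBasis.orthonormal.1 i0
      have h2 := EuclideanSpace.norm_eq (hH.eigenvectorBasis i0)
      rw [h1] at h2
      have h3 := Real.sqrt_eq_one.mp h2.symm
      simpa [Real.norm_eq_abs, sq_abs] using h3
    have hquad : v ⬝ᵥ (K + Matrix.diagonal lam) *ᵥ v = hH.eigenvalues i0 := by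
      rw [hAv, dotProduct_smul]
      have hvv : v ⬝ᵥ v = 1 := by
        rw [← hnorm1]
        apply Finset.sum_congr rfl; intro j _; rw [sq]
      rw [hvv, smul_eq_mul, mul_one]
    have hqA := hquadA v
    rw [hquad] at hqA
    constructor
    · have h1 := hlamlow v
      have h2 := hKnonneg v
      rw [hnorm1] at h1
      rw [hqA]; linarith
    · have h1 := hlamhigh v
      have h2 := hquadK v
      rw [hnorm1] at h1 h2
      rw [hqA]; linarith
  refine ⟨hPD, ?_⟩
  have hsup : (⨆ i, hH.eigenvalues i) ≤ C + Λmax := ciSup_le fun i => (heig i).2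
  have hinf : Λmin ≤ (⨅ i, hH.eigenvalues i) := le_ciInf fun i => (heig i).1
  exact div_le_div₀ (by linarith) hsup hΛmin hinf
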